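/- Universal representation of the discounted asset price for American puts: there exists a unique (up to a.s. equality at each time) adapted, square-integrable process K = (K_t)_{t=0,...,N} such that, for every t ∈ {0,...,N}, -(1+r)^{-t} P_t = E_t[ Σ_{u=t}^{N-1} (r/(1+r)) (1+r)^{-u} · max_{t≤v≤u} (-K_v) + (1+r)^{-N} · max_{t≤v≤N} (-K_v) ] a.s. (empty sums are 0). -/

import Mathlib

open MeasureTheory Filter

/-- Running maximum `max_{t ≤ v ≤ u} L v ω` (intended for `t ≤ u`). -/
noncomputable def runMax {Ω : Type*} (L : ℕ → Ω → ℝ) (t u : ℕ) (ω : Ω) : ℝ :=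
  (Finset.Icc t u).fold max (L t ω) fun v => L v ω

/-- Running minimum `min_{t ≤ v ≤ u} K v ω` (intended for `t ≤ u`). -/
noncomputable def runMin {Ω : Type*} (K : ℕ → Ω → ℝ) (t u : ℕ) (ω : Ω) : ℝ :=
  (Finset.Icc t u).fold min (K t ω) fun v => K v ω

/-- A discrete-time nonlinear expectation on the horizon `{0, ..., N}`:
a family of maps `E t` sending square-integrable `F N`-measurable random
variables to square-integrable `F t`-measurable random variables, satisfying
monotonicity, strict monotonicity, translation invariance, the tower property,
the zero-one law and monotone convergence. -/
structure NLExp {Ω : Type*} {m0 : MeasurableSpace Ω} (μ : Measure Ω)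
    (F : Filtration ℕ m0) (N : ℕ) where
  E : ℕ → (Ω → ℝ) → Ω → ℝ
  adapted : ∀ t, t ≤ N → ∀ ξ : Ω → ℝ, StronglyMeasurable[F N] ξ → MemLp ξ 2 μ →
    StronglyMeasurable[F t] (E t ξ)
  sqInt : ∀ t, t ≤ N → ∀ ξ : Ω → ℝ, StronglyMeasurable[F N] ξ → MemLp ξ 2 μ →
    MemLp (E t ξ) 2 μ
  mono : ∀ t, t ≤ N → ∀ ξ η : Ω → ℝ, StronglyMeasurable[F N] ξ → MemLp ξ 2 μ →
    StronglyMeasurable[F N] η → MemLp η 2 μ → ξ ≤ᵐ[μ] η → E t ξ ≤ᵐ[μ] E t η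
  strictMono : ∀ t, t ≤ N → ∀ ξ η : Ω → ℝ, StronglyMeasurable[F N] ξ → MemLp ξ 2 μ →
    StronglyMeasurable[F N] η → MemLp η 2 μ → ξ ≤ᵐ[μ] η →
    0 < μ {ω | ξ ω < η ω} → 0 < μ {ω | E t ξ ω < E t η ω}
  translation : ∀ t, t ≤ N → ∀ ξ ζ : Ω → ℝ, StronglyMeasurable[F N] ξ → MemLp ξ 2 μ →
    StronglyMeasurable[F t] ζ → MemLp ζ 2 μ → E t (ξ + ζ) =ᵐ[μ] E t ξ + ζ
  tower : ∀ s t, s ≤ t → t ≤ N → ∀ ξ : Ω → ℝ, StronglyMeasurable[F N] ξ → MemLp ξ 2 μ →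
    E s (E t ξ) =ᵐ[μ] E s ξ
  zeroOne : ∀ t, t ≤ N → ∀ ξ η : Ω → ℝ, StronglyMeasurable[F N] ξ → MemLp ξ 2 μ →
    StronglyMeasurable[F N] η → MemLp η 2 μ → ∀ A : Set Ω, MeasurableSet[F t] A →
    E t (A.indicator ξ + Aᶜ.indicator η) =ᵐ[μ]
      A.indicator (E t ξ) + Aᶜ.indicator (E t η)
  monoConv : ∀ t, t ≤ N → ∀ (ξs : ℕ → Ω → ℝ) (ξ : Ω → ℝ),
    (∀ n, StronglyMeasurable[F N] (ξs n)) → (∀ n, MemLp (ξs n) 2 μ) →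
    StronglyMeasurable[F N] ξ → MemLp ξ 2 μ →
    (∀ᵐ ω ∂μ, (Monotone fun n => ξs n ω) ∨ (Antitone fun n => ξs n ω)) →
    (∀ᵐ ω ∂μ, Tendsto (fun n => ξs n ω) atTop (nhds (ξ ω))) →
    ∀ᵐ ω ∂μ, Tendsto (fun n => E t (ξs n) ω) atTop (nhds (E t ξ ω))


section RatExtend

variable {a c : ℝ} (ha : 0 < a) (hac : a ≤ c) {h : ℚ → ℝ}
  (hyp : ∀ p q : ℚ, (p : ℝ) ≤ (q : ℝ) →
    a * ((q : ℝ) - p) ≤ h q - h p ∧ h q - h p ≤ c * ((q : ℝ) - p))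

/-- extension of `h` to the reals by right inf -/
noncomputable def ratExt (h : ℚ → ℝ) (ℓ : ℝ) : ℝ :=
  sInf ((fun q : ℚ => h q) '' {q : ℚ | ℓ ≤ (q : ℝ)})

lemma ratExt_set_nonempty (ℓ : ℝ) :
    ((fun q : ℚ => h q) '' {q : ℚ | ℓ ≤ (q : ℝ)}).Nonempty := by
  obtain ⟨q, hq⟩ := exists_rat_gt ℓ
  exact ⟨h q, ⟨q, hq.le, rfl⟩⟩

include hyp ha in
lemma ratExt_bddBelow (ℓ : ℝ) :
    BddBelow ((fun q : ℚ => h q) '' {q : ℚ | ℓ ≤ (q : ℝ)}) := by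
  obtain ⟨p, hp⟩ := exists_rat_lt ℓ
  refine ⟨h p, ?_⟩
  rintro y ⟨q, hq, rfl⟩
  have hpq : (p : ℝ) ≤ q := le_trans hp.le hq
  have := (hyp p q hpq).1
  nlinarith

include hyp ha in
lemma ratExt_le (ℓ : ℝ) (q : ℚ) (hq : ℓ ≤ (q : ℝ)) : ratExt h ℓ ≤ h q :=
  csInf_le (ratExt_bddBelow ha hyp ℓ) ⟨q, hq, rfl⟩

include hyp ha in
lemma le_ratExt (ℓ : ℝ) (p : ℚ) (hp : (p : ℝ) ≤ ℓ) :
    h p + a * (ℓ - p) ≤ ratExt h ℓ := by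
  refine le_csInf (ratExt_set_nonempty ℓ) ?_
  rintro y ⟨q, hq, rfl⟩
  simp only [Set.mem_setOf_eq] at hq
  have hpq : (p : ℝ) ≤ q := le_trans hp hq
  have h1 := (hyp p q hpq).1
  have : a * (ℓ - p) ≤ a * ((q : ℝ) - p) := by
    apply mul_le_mul_of_nonneg_left _ ha.le
    linarith
  linarith

include hyp ha in
lemma ratExt_rat (q : ℚ) : ratExt h (q : ℝ) = h q := by
  refine le_antisymm (ratExt_le ha hyp _ q le_rfl) ?_
  have := le_ratExt ha hyp (q : ℝ) q le_rfl
  simpa using this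

include hyp ha in
lemma ratExt_mono : Monotone (ratExt h) := by
  intro ℓ ℓ' hll
  apply le_csInf (ratExt_set_nonempty ℓ')
  rintro y ⟨q, hq, rfl⟩
  exact ratExt_le ha hyp ℓ q (le_trans hll hq)

include hyp ha hac in
lemma ratExt_upper {ℓ ℓ' : ℝ} (hll : ℓ ≤ ℓ') :
    ratExt h ℓ' - ratExt h ℓ ≤ c * (ℓ' - ℓ) := by
  have hc : 0 < c := lt_of_lt_of_le ha hac
  have key : ∀ ε : ℝ, 0 < ε → ratExt h ℓ' - ratExt h ℓ ≤ c * (ℓ' - ℓ) + 2 * c * ε := by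
    intro ε hε
    obtain ⟨q, hq1, hq2⟩ := exists_rat_btwn (show ℓ' < ℓ' + ε by linarith)
    obtain ⟨p, hp1, hp2⟩ := exists_rat_btwn (show ℓ - ε < ℓ by linarith)
    have h1 : ratExt h ℓ' ≤ h q := ratExt_le ha hyp _ q hq1.le
    have h2 : h p + a * (ℓ - p) ≤ ratExt h ℓ := le_ratExt ha hyp _ p hp2.le
    have hpq : (p : ℝ) ≤ q := by linarith
    have h3 := (hyp p q hpq).2
    have h4 : a * (ℓ - p) ≥ 0 := mul_nonneg ha.le (by linarith)
    have h5 : c * ((q:ℝ) - p) ≤ c * (ℓ' - ℓ + 2*ε) := by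
      apply mul_le_mul_of_nonneg_left _ hc.le; linarith
    nlinarith
  by_contra hcon
  push_neg at hcon
  set d := ratExt h ℓ' - ratExt h ℓ - c * (ℓ' - ℓ) with hd
  have hd0 : 0 < d := by linarith
  have := key (d / (4 * c)) (by positivity)
  have : 2 * c * (d / (4 * c)) = d / 2 := by field_simp; ring
  nlinarith [key (d / (4 * c)) (by positivity)]

include hyp ha in
lemma ratExt_lower {ℓ ℓ' : ℝ} (hll : ℓ ≤ ℓ') :
    a * (ℓ' - ℓ) ≤ ratExt h ℓ' - ratExt h ℓ := by
  have key : ∀ ε : ℝ, 0 < ε → a * (ℓ' - ℓ) - a * ε ≤ ratExt h ℓ' - ratExt h ℓ := by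
    intro ε hε
    rcases le_or_gt (ℓ' - ℓ) ε with hle | hlt
    · have := ratExt_mono ha hyp hll
      have : a * (ℓ' - ℓ) - a * ε ≤ 0 := by nlinarith
      have hm := ratExt_mono ha hyp hll
      linarith
    · obtain ⟨q, hq1, hq2⟩ := exists_rat_btwn (show ℓ < ℓ + ε by linarith)
      have h2 : ratExt h ℓ ≤ h q := ratExt_le ha hyp _ q hq1.le
      -- every member h q' with q' ≥ ℓ' satisfies h q' ≥ h q + a (q' - q)
      have h3 : ratExt h ℓ + a * (ℓ' - ℓ - ε) ≤ ratExt h ℓ' := by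
        apply le_csInf (ratExt_set_nonempty ℓ')
        rintro y ⟨q', hq', rfl⟩
        simp only [Set.mem_setOf_eq] at hq'
        have hqq' : (q : ℝ) ≤ q' := by linarith
        have := (hyp q q' hqq').1
        have h5 : a * (ℓ' - ℓ - ε) ≤ a * ((q':ℝ) - q) := by
          apply mul_le_mul_of_nonneg_left _ ha.le; linarith
        linarith
      linarith
  by_contra hcon
  push_neg at hcon
  set d := a * (ℓ' - ℓ) - (ratExt h ℓ' - ratExt h ℓ) with hd
  have hd0 : 0 < d := by linarith
  have := key (d / (2 * a)) (by positivity)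
  have h2 : a * (d / (2 * a)) = d / 2 := by field_simp
  linarith

include hyp ha in
lemma le_ratExt_iff (b x : ℝ) :
    x ≤ ratExt h b ↔ ∀ q : ℚ, b ≤ (q : ℝ) → x ≤ h q := by
  constructor
  · intro hx q hq
    exact le_trans hx (ratExt_le ha hyp _ q hq)
  · intro hx
    refine le_csInf (ratExt_set_nonempty b) ?_
    rintro y ⟨q, hq, rfl⟩
    exact hx q hq

end RatExtend

section SolveReal

variable {a c : ℝ} {H : ℝ → ℝ}
  (ha : 0 < a) (hac : a ≤ c)
  (hlow : ∀ ℓ ℓ' : ℝ, ℓ ≤ ℓ' → a * (ℓ' - ℓ) ≤ H ℓ' - H ℓ)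
  (hupp : ∀ ℓ ℓ' : ℝ, ℓ ≤ ℓ' → H ℓ' - H ℓ ≤ c * (ℓ' - ℓ))

/-- the root of `H x = X` -/
noncomputable def theRoot (H : ℝ → ℝ) (X : ℝ) : ℝ := sSup {x : ℝ | H x < X}

include ha hlow in
lemma theRoot_mono_aux : ∀ x y : ℝ, x ≤ y → H x ≤ H y := by
  intro x y hxy
  have := hlow x y hxy
  nlinarith

include ha hlow in
lemma root_set_nonempty (X : ℝ) : {x : ℝ | H x < X}.Nonempty := by
  refine ⟨-((|H 0| + |X| + 1) / a), ?_⟩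
  set x := -((|H 0| + |X| + 1) / a) with hx
  have hx0 : x ≤ 0 := by
    rw [hx, neg_nonpos]; positivity
  have := hlow x 0 hx0
  have hax : a * (0 - x) = |H 0| + |X| + 1 := by
    rw [hx, zero_sub, neg_neg]; field_simp
  simp only [Set.mem_setOf_eq]
  have h1 : H x ≤ H 0 - (|H 0| + |X| + 1) := by linarith
  have h2 : H 0 ≤ |H 0| := le_abs_self _
  have h3 : -|X| ≤ X := neg_abs_le _
  linarith

include ha hlow in
lemma root_set_bddAbove (X : ℝ) : BddAbove {x : ℝ | H x < X} := by
  refine ⟨(|H 0| + |X| + 1) / a, ?_⟩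
  rintro x hx
  simp only [Set.mem_setOf_eq] at hx
  rcases le_or_gt x 0 with h0 | h0
  · have : (0:ℝ) ≤ (|H 0| + |X| + 1) / a := by positivity
    linarith
  · have := hlow 0 x h0.le
    have h2 : -|H 0| ≤ H 0 := neg_abs_le _
    have h3 : X ≤ |X| := le_abs_self _
    have h4 : a * x ≤ |H 0| + |X| := by nlinarith
    rw [div_eq_inv_mul, ← inv_mul_cancel_left₀ (ne_of_gt ha) x]
    have : (0:ℝ) < a⁻¹ := by positivity
    nlinarith

include ha hac hlow hupp in
lemma theRoot_spec (X : ℝ) : H (theRoot H X) = X := by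
  have hc : 0 < c := lt_of_lt_of_le ha hac
  set R := theRoot H X with hR
  have hne := root_set_nonempty ha hlow X
  have hbdd := root_set_bddAbove ha hlow X
  rcases lt_trichotomy (H R) X with h | h | h
  · exfalso
    set δ := (X - H R) / (2 * c) with hδ
    have hδ0 : 0 < δ := div_pos (by linarith) (by linarith)
    have h1 : H (R + δ) ≤ H R + c * δ := by have := hupp R (R + δ) (by linarith); linarith
    have h2 : c * δ = (X - H R) / 2 := by rw [hδ]; field_simp
    have h3 : H (R + δ) < X := by linarith
    have : R + δ ≤ R := le_csSup hbdd h3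
    linarith
  · exact h
  · exfalso
    set δ := (H R - X) / (2 * c) with hδ
    have hδ0 : 0 < δ := div_pos (by linarith) (by linarith)
    have h1 : H R - H (R - δ) ≤ c * δ := by have := hupp (R - δ) R (by linarith); linarith
    have h2 : c * δ = (H R - X) / 2 := by rw [hδ]; field_simp
    have h3 : X < H (R - δ) := by linarith
    have hub : R ≤ R - δ := by
      apply csSup_le hne
      intro x hx
      simp only [Set.mem_setOf_eq] at hx
      by_contra hcon
      push_neg at hcon
      have := theRoot_mono_aux ha hlow (R - δ) x hcon.le
      linarith
    linarith

include ha hac hlow hupp in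
lemma theRoot_le_iff (X b : ℝ) : theRoot H X ≤ b ↔ X ≤ H b := by
  have hspec := theRoot_spec ha hac hlow hupp X
  constructor
  · intro hb
    rw [← hspec]
    exact theRoot_mono_aux ha hlow _ _ hb
  · intro hb
    by_contra hcon
    push_neg at hcon
    have := hlow b (theRoot H X) hcon.le
    nlinarith

include ha hac hlow hupp in
lemma theRoot_abs_le (X : ℝ) : |theRoot H X| ≤ (|X| + |H 0|) / a := by
  have hspec := theRoot_spec ha hac hlow hupp X
  set R := theRoot H X with hR
  rcases le_or_gt 0 R with h0 | h0
  · have := hlow 0 R h0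
    rw [abs_of_nonneg h0]
    rw [le_div_iff₀ ha]
    have h2 : H R - H 0 ≤ |X| + |H 0| := by
      rw [hspec]
      have := le_abs_self X; have := neg_abs_le (H 0); linarith
    nlinarith
  · have := hlow R 0 h0.le
    rw [abs_of_neg h0, le_div_iff₀ ha]
    have h2 : H 0 - H R ≤ |H 0| + |X| := by
      rw [hspec]
      have := le_abs_self (H 0); have := neg_abs_le X; linarith
    nlinarith

include ha hlow in
lemma root_unique {x y : ℝ} (hxy : H x = H y) : x = y := by
  rcases lt_trichotomy x y with h | h | h
  · have := hlow x y h.le; nlinarith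
  · exact h
  · have := hlow y x h.le; nlinarith

end SolveReal
section RunMax

variable {Ω : Type*} {L L' : ℕ → Ω → ℝ}

lemma fold_max_eq {s : Finset ℕ} (hs : s.Nonempty) (b : ℝ) (f : ℕ → ℝ) :
    s.fold max b f = max b (s.sup' hs f) := by
  induction hs using Finset.Nonempty.cons_induction with
  | singleton a => simp [max_comm]
  | cons a s ha hs ih =>
      rw [Finset.fold_cons, Finset.sup'_cons (H := hs), ih]
      simp only [max_left_comm]

lemma sup'_set_congr {s t : Finset ℕ} (h : s = t) (hs : s.Nonempty) (f : ℕ → ℝ) :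
    s.sup' hs f = t.sup' (h ▸ hs) f := by subst h; rfl

lemma runMax_eq_sup' {t u : ℕ} (h : t ≤ u) (ω : Ω) :
    runMax L t u ω = (Finset.Icc t u).sup' (Finset.nonempty_Icc.2 h) (fun v => L v ω) := by
  rw [runMax, fold_max_eq (Finset.nonempty_Icc.2 h)]
  exact max_eq_right (Finset.le_sup' (f := fun v => L v ω) (Finset.mem_Icc.2 ⟨le_rfl, h⟩))

lemma runMax_self (t : ℕ) (ω : Ω) : runMax L t t ω = L t ω := by
  rw [runMax_eq_sup' le_rfl]
  simp

lemma runMax_left_succ {t u : ℕ} (h : t < u) (ω : Ω) :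
    runMax L t u ω = max (L t ω) (runMax L (t+1) u ω) := by
  have h1 : t + 1 ≤ u := h
  have hset : Finset.Icc t u = insert t (Finset.Icc (t+1) u) := by
    ext x; simp only [Finset.mem_Icc, Finset.mem_insert]; omega
  rw [runMax_eq_sup' h.le, runMax_eq_sup' h1,
    sup'_set_congr hset _ (fun v => L v ω),
    Finset.sup'_insert (H := Finset.nonempty_Icc.2 h1)]

lemma runMax_succ_right {t u : ℕ} (h : t ≤ u) (ω : Ω) :
    runMax L t (u+1) ω = max (L (u+1) ω) (runMax L t u ω) := by
  have hset : Finset.Icc t (u+1) = insert (u+1) (Finset.Icc t u) := by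
    ext x; simp only [Finset.mem_Icc, Finset.mem_insert]; omega
  rw [runMax_eq_sup' (h.trans u.le_succ), runMax_eq_sup' h,
    sup'_set_congr hset _ (fun v => L v ω),
    Finset.sup'_insert (H := Finset.nonempty_Icc.2 h)]

lemma runMax_congr {t u : ℕ} (h : t ≤ u) {ω : Ω}
    (hL : ∀ v, t ≤ v → v ≤ u → L v ω = L' v ω) :
    runMax L t u ω = runMax L' t u ω := by
  rw [runMax_eq_sup' h, runMax_eq_sup' h]
  apply Finset.sup'_congr _ rfl
  intro v hv
  rw [Finset.mem_Icc] at hv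
  exact hL v hv.1 hv.2

lemma le_runMax {t u v : ℕ} (h1 : t ≤ v) (h2 : v ≤ u) (ω : Ω) :
    L v ω ≤ runMax L t u ω := by
  rw [runMax_eq_sup' (h1.trans h2)]
  exact Finset.le_sup' (f := fun v => L v ω) (Finset.mem_Icc.2 ⟨h1, h2⟩)

variable {m : MeasurableSpace Ω}

lemma runMax_stronglyMeasurable {t u : ℕ} (h : t ≤ u)
    (hL : ∀ v, t ≤ v → v ≤ u → StronglyMeasurable[m] (L v)) :
    StronglyMeasurable[m] (fun ω => runMax L t u ω) := by
  induction u, h using Nat.le_induction with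
  | base =>
      simp only [runMax_self]
      exact hL t le_rfl le_rfl
  | succ u hu ih =>
      simp only [runMax_succ_right hu]
      exact (hL (u+1) (by omega) le_rfl).sup (ih (fun v a b => hL v a (by omega)))

lemma runMax_memLp {t u : ℕ} (h : t ≤ u) {μ : Measure Ω}
    (hL : ∀ v, t ≤ v → v ≤ u → MemLp (L v) 2 μ) :
    MemLp (fun ω => runMax L t u ω) 2 μ := by
  induction u, h using Nat.le_induction with
  | base =>
      simp only [runMax_self]
      exact hL t le_rfl le_rfl
  | succ u hu ih =>
      simp only [runMax_succ_right hu]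
      exact (hL (u+1) (by omega) le_rfl).sup (ih (fun v a b => hL v a (by omega)))

lemma memLp_max {μ : Measure Ω} {f g : Ω → ℝ} (hf : MemLp f 2 μ) (hg : MemLp g 2 μ) :
    MemLp (fun ω => max (f ω) (g ω)) 2 μ := hf.sup hg

end RunMax
section NLBasic

variable {Ω : Type*} {m0 : MeasurableSpace Ω} {μ : Measure Ω} [IsProbabilityMeasure μ]
  {F : Filtration ℕ m0} {N : ℕ} (EE : NLExp μ F N)

lemma NLExp.congr_ae {t : ℕ} (ht : t ≤ N) {ξ η : Ω → ℝ}
    (hξm : StronglyMeasurable[F N] ξ) (hξi : MemLp ξ 2 μ)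
    (hηm : StronglyMeasurable[F N] η) (hηi : MemLp η 2 μ)
    (h : ξ =ᵐ[μ] η) : EE.E t ξ =ᵐ[μ] EE.E t η := by
  have h1 := EE.mono t ht ξ η hξm hξi hηm hηi h.le
  have h2 := EE.mono t ht η ξ hηm hηi hξm hξi h.symm.le
  filter_upwards [h1, h2] with ω h1 h2
  exact le_antisymm h1 h2

lemma NLExp.le_add_const {t : ℕ} (ht : t ≤ N) {ξ η : Ω → ℝ} {d : ℝ}
    (hξm : StronglyMeasurable[F N] ξ) (hξi : MemLp ξ 2 μ)
    (hηm : StronglyMeasurable[F N] η) (hηi : MemLp η 2 μ)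
    (h : ∀ ω, ξ ω ≤ η ω + d) :
    ∀ᵐ ω ∂μ, EE.E t ξ ω ≤ EE.E t η ω + d := by
  have hm : StronglyMeasurable[F N] (η + fun _ => d) :=
    hηm.add stronglyMeasurable_const
  have hi : MemLp (η + fun _ => d) 2 μ := hηi.add (memLp_const d)
  have h1 := EE.mono t ht ξ (η + fun _ => d) hξm hξi hm hi (ae_of_all _ h)
  have h2 := EE.translation t ht η (fun _ => d) hηm hηi stronglyMeasurable_const
    (memLp_const d)
  filter_upwards [h1, h2] with ω h1 h2
  calc EE.E t ξ ω ≤ EE.E t (η + fun _ => d) ω := h1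
    _ = EE.E t η ω + d := h2

lemma NLExp.E_zero {t : ℕ} (ht : t ≤ N) : EE.E t 0 =ᵐ[μ] 0 := by
  have sm0 : StronglyMeasurable[F N] (0 : Ω → ℝ) := stronglyMeasurable_const
  have mem0 : MemLp (0 : Ω → ℝ) 2 μ := MemLp.zero
  have h1 := EE.translation t ht 0 (EE.E t 0) sm0 mem0
    (EE.adapted t ht 0 sm0 mem0) (EE.sqInt t ht 0 sm0 mem0)
  rw [zero_add] at h1
  have h2 := EE.tower t t le_rfl ht 0 sm0 mem0
  have h3 : EE.E t 0 + EE.E t 0 =ᵐ[μ] EE.E t 0 := h1.symm.trans h2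
  filter_upwards [h3] with ω h3
  have : EE.E t 0 ω + EE.E t 0 ω = EE.E t 0 ω := h3
  simpa using by linarith

lemma NLExp.E_id {t : ℕ} (ht : t ≤ N) {ζ : Ω → ℝ}
    (hζm : StronglyMeasurable[F t] ζ) (hζi : MemLp ζ 2 μ) :
    EE.E t ζ =ᵐ[μ] ζ := by
  have sm0 : StronglyMeasurable[F N] (0 : Ω → ℝ) := stronglyMeasurable_const
  have mem0 : MemLp (0 : Ω → ℝ) 2 μ := MemLp.zero
  have h1 := EE.translation t ht 0 ζ sm0 mem0 hζm hζi
  rw [zero_add] at h1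
  have h2 := EE.E_zero ht
  filter_upwards [h1, h2] with ω h1 h2
  have h2' : EE.E t 0 ω = 0 := h2
  have : EE.E t ζ ω = EE.E t 0 ω + ζ ω := h1
  rw [this, h2', zero_add]

end NLBasic

section Dyadic

/-- dyadic upper approximation -/
noncomputable def dyad (n : ℕ) (x : ℝ) : ℚ := (⌈(2^n : ℝ) * x⌉ : ℚ) / 2^n

lemma dyad_cast (n : ℕ) (x : ℝ) :
    ((dyad n x : ℚ) : ℝ) = ((⌈(2^n : ℝ) * x⌉ : ℤ) : ℝ) / 2^n := by
  rw [dyad]; push_cast; ring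

lemma le_dyad (n : ℕ) (x : ℝ) : x ≤ (dyad n x : ℝ) := by
  rw [dyad_cast, le_div_iff₀ (by positivity)]
  calc x * 2^n = (2^n : ℝ) * x := by ring
  _ ≤ _ := Int.le_ceil _

lemma dyad_lt (n : ℕ) (x : ℝ) : (dyad n x : ℝ) < x + ((2:ℝ)^n)⁻¹ := by
  rw [dyad_cast, div_lt_iff₀ (by positivity)]
  have h := Int.ceil_lt_add_one ((2^n : ℝ) * x)
  have : (x + ((2:ℝ)^n)⁻¹) * 2^n = 2^n * x + 1 := by
    field_simp
  rw [this]
  linarith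

lemma dyad_antitone (x : ℝ) : Antitone fun n => ((dyad n x : ℚ) : ℝ) := by
  apply antitone_nat_of_succ_le
  intro n
  rw [dyad_cast, dyad_cast, div_le_div_iff₀ (by positivity) (by positivity)]
  have h1 : (⌈(2^(n+1) : ℝ) * x⌉ : ℝ) ≤ 2 * (⌈(2^n : ℝ) * x⌉ : ℝ) := by
    have := Int.le_ceil ((2^n : ℝ) * x)
    have h2 : (2^(n+1) : ℝ) * x = 2 * ((2^n : ℝ) * x) := by ring
    rw [show (2 * (⌈(2^n : ℝ) * x⌉ : ℝ)) = ((2 * ⌈(2^n : ℝ) * x⌉ : ℤ) : ℝ) by push_cast; ring]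
    have := Int.ceil_le.2 (show (2^(n+1) : ℝ) * x ≤ ((2 * ⌈(2^n : ℝ) * x⌉ : ℤ) : ℝ) by
      push_cast; rw [h2]; linarith)
    exact_mod_cast this
  calc (⌈(2^(n+1) : ℝ) * x⌉ : ℝ) * 2^n ≤ 2 * (⌈(2^n : ℝ) * x⌉ : ℝ) * 2^n := by
        apply mul_le_mul_of_nonneg_right h1 (by positivity)
  _ = (⌈(2^n : ℝ) * x⌉ : ℝ) * 2^(n+1) := by ring

lemma dyad_tendsto (x : ℝ) : Tendsto (fun n => ((dyad n x : ℚ) : ℝ)) atTop (nhds x) := by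
  have h0 : Tendsto (fun n : ℕ => ((2:ℝ)^n)⁻¹) atTop (nhds 0) := by
    simp_rw [← inv_pow]
    exact tendsto_pow_atTop_nhds_zero_of_lt_one (by norm_num) (by norm_num)
  have hg : Tendsto (fun n : ℕ => x + ((2:ℝ)^n)⁻¹) atTop (nhds x) := by
    simpa using tendsto_const_nhds.add h0
  exact tendsto_of_tendsto_of_tendsto_of_le_of_le tendsto_const_nhds hg
    (fun n => le_dyad n x) (fun n => (dyad_lt n x).le)

lemma dyad_measurable {Ω : Type*} {m : MeasurableSpace Ω} {L : Ω → ℝ}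
    (hL : Measurable[m] L) (n : ℕ) :
    Measurable[m] (fun ω => ((dyad n (L ω) : ℚ) : ℝ)) := by
  simp_rw [dyad_cast]
  apply Measurable.div_const
  exact (Measurable.of_discrete (f := fun z : ℤ => (z : ℝ))).comp
    ((measurable_const.mul hL).ceil)

end Dyadic
lemma tendsto_add_inv_pow (x c : ℝ) :
    Tendsto (fun n : ℕ => x + c * ((2:ℝ)^n)⁻¹) atTop (nhds x) := by
  have h0 : Tendsto (fun n : ℕ => ((2:ℝ)^n)⁻¹) atTop (nhds 0) := by
    simp_rw [← inv_pow]
    exact tendsto_pow_atTop_nhds_zero_of_lt_one (by norm_num) (by norm_num)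
  have h1 : Tendsto (fun n : ℕ => c * ((2:ℝ)^n)⁻¹) atTop (nhds (c * 0)) := h0.const_mul c
  rw [mul_zero] at h1
  have h2 := (tendsto_const_nhds (x := x) (f := atTop (α := ℕ))).add h1
  simpa using h2

section Core

variable {Ω : Type*} {m0 : MeasurableSpace Ω} {μ : Measure Ω} [IsProbabilityMeasure μ]
  {F : Filtration ℕ m0} {N : ℕ}

/-- a fixed version of `E_t[f ℓ]` depending measurably on `ω` and continuously on `ℓ` -/
noncomputable def ghat (EE : NLExp μ F N) (t : ℕ) (f : ℝ → Ω → ℝ) (ℓ : ℝ) (ω : Ω) : ℝ :=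
  ratExt (fun q : ℚ => EE.E t (f (q : ℝ)) ω) ℓ

/-- the set where the rational skeleton of `E_t[f ·]` is bi-Lipschitz -/
def goodSet (EE : NLExp μ F N) (t : ℕ) (f : ℝ → Ω → ℝ) (a c : ℝ) : Set Ω :=
  ⋂ (p : ℚ) (q : ℚ), {ω | (p : ℝ) ≤ (q : ℝ) →
    a * ((q : ℝ) - (p : ℝ)) ≤ EE.E t (f (q : ℝ)) ω - EE.E t (f (p : ℝ)) ω ∧
    EE.E t (f (q : ℝ)) ω - EE.E t (f (p : ℝ)) ω ≤ c * ((q : ℝ) - (p : ℝ))}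

lemma mem_goodSet {EE : NLExp μ F N} {t : ℕ} {f : ℝ → Ω → ℝ} {a c : ℝ} {ω : Ω} :
    ω ∈ goodSet EE t f a c ↔ ∀ p q : ℚ, (p : ℝ) ≤ (q : ℝ) →
      a * ((q : ℝ) - (p : ℝ)) ≤ EE.E t (f (q : ℝ)) ω - EE.E t (f (p : ℝ)) ω ∧
      EE.E t (f (q : ℝ)) ω - EE.E t (f (p : ℝ)) ω ≤ c * ((q : ℝ) - (p : ℝ)) := by
  simp [goodSet, Set.mem_iInter, Set.mem_setOf_eq]

variable (EE : NLExp μ F N) {t : ℕ} {f : ℝ → Ω → ℝ} {a c : ℝ}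
variable (ht : t ≤ N) (ha : 0 < a) (hac : a ≤ c)
  (hfm : ∀ ℓ : ℝ, StronglyMeasurable[F N] (f ℓ))
  (hfi : ∀ ℓ : ℝ, MemLp (f ℓ) 2 μ)
  (hlow : ∀ ℓ ℓ' : ℝ, ℓ ≤ ℓ' → ∀ ω, a * (ℓ' - ℓ) ≤ f ℓ' ω - f ℓ ω)
  (hupp : ∀ ℓ ℓ' : ℝ, ℓ ≤ ℓ' → ∀ ω, f ℓ' ω - f ℓ ω ≤ c * (ℓ' - ℓ))
  (hcm : ∀ L : Ω → ℝ, StronglyMeasurable[F t] L →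
    StronglyMeasurable[F N] (fun ω => f (L ω) ω))
  (hci : ∀ L : Ω → ℝ, StronglyMeasurable[F t] L → MemLp L 2 μ →
    MemLp (fun ω => f (L ω) ω) 2 μ)

include hlow ha in
lemma f_mono : ∀ ℓ ℓ' : ℝ, ℓ ≤ ℓ' → ∀ ω, f ℓ ω ≤ f ℓ' ω := by
  intro ℓ ℓ' h ω
  have := hlow ℓ ℓ' h ω
  nlinarith

include ht hfm hfi in
lemma goodSet_measurableSet : MeasurableSet[F t] (goodSet EE t f a c) := by
  have hmeas : ∀ q : ℚ, Measurable[F t] (EE.E t (f (q : ℝ))) := fun q =>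
    (EE.adapted t ht _ (hfm q) (hfi q)).measurable
  refine MeasurableSet.iInter fun p => MeasurableSet.iInter fun q => ?_
  by_cases hpq : (p : ℝ) ≤ (q : ℝ)
  · simp only [hpq, forall_true_left]
    exact MeasurableSet.inter
      (measurableSet_le measurable_const ((hmeas q).sub (hmeas p)))
      (measurableSet_le ((hmeas q).sub (hmeas p)) measurable_const)
  · simp only [hpq]
    simp

include EE ht ha hac hfm hfi hlow hupp in
lemma goodSet_ae : ∀ᵐ ω ∂μ, ω ∈ goodSet EE t f a c := by
  rw [ae_iff]
  have key : ∀ p q : ℚ, ∀ᵐ ω ∂μ, ((p : ℝ) ≤ (q : ℝ) →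
      a * ((q : ℝ) - (p : ℝ)) ≤ EE.E t (f (q : ℝ)) ω - EE.E t (f (p : ℝ)) ω ∧
      EE.E t (f (q : ℝ)) ω - EE.E t (f (p : ℝ)) ω ≤ c * ((q : ℝ) - (p : ℝ))) := by
    intro p q
    by_cases hpq : (p : ℝ) ≤ (q : ℝ)
    · have h1 : ∀ ω, f (p : ℝ) ω ≤ f (q : ℝ) ω + (-(a * ((q : ℝ) - (p : ℝ)))) := by
        intro ω; have := hlow (p : ℝ) (q : ℝ) hpq ω; linarith
      have h2 : ∀ ω, f (q : ℝ) ω ≤ f (p : ℝ) ω + c * ((q : ℝ) - (p : ℝ)) := by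
        intro ω; have := hupp (p : ℝ) (q : ℝ) hpq ω; linarith
      have e1 := EE.le_add_const ht (hfm _) (hfi _) (hfm _) (hfi _) h1
      have e2 := EE.le_add_const ht (hfm _) (hfi _) (hfm _) (hfi _) h2
      filter_upwards [e1, e2] with ω e1 e2
      intro _
      constructor <;> linarith
    · exact ae_of_all _ fun ω h => absurd h hpq
  have : ∀ᵐ ω ∂μ, ∀ p q : ℚ, ((p : ℝ) ≤ (q : ℝ) →
      a * ((q : ℝ) - (p : ℝ)) ≤ EE.E t (f (q : ℝ)) ω - EE.E t (f (p : ℝ)) ω ∧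
      EE.E t (f (q : ℝ)) ω - EE.E t (f (p : ℝ)) ω ≤ c * ((q : ℝ) - (p : ℝ))) :=
    ae_all_iff.2 fun p => ae_all_iff.2 fun q => key p q
  rw [ae_iff] at this
  convert this using 2
  ext ω
  simp only [Set.mem_setOf_eq, mem_goodSet]

-- pointwise consequences on the good set
include ha in
lemma ghat_good_facts {ω : Ω} (hω : ω ∈ goodSet EE t f a c) :
    (∀ ℓ ℓ' : ℝ, ℓ ≤ ℓ' → a * (ℓ' - ℓ) ≤ ghat EE t f ℓ' ω - ghat EE t f ℓ ω) ∧
    (∀ ℓ ℓ' : ℝ, ℓ ≤ ℓ' → (hac' : a ≤ c) → ghat EE t f ℓ' ω - ghat EE t f ℓ ω ≤ c * (ℓ' - ℓ)) ∧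
    (∀ q : ℚ, ghat EE t f (q : ℝ) ω = EE.E t (f (q : ℝ)) ω) ∧
    (∀ b x : ℝ, x ≤ ghat EE t f b ω ↔ ∀ q : ℚ, b ≤ (q : ℝ) → x ≤ EE.E t (f (q : ℝ)) ω) := by
  have hyp := mem_goodSet.1 hω
  exact ⟨fun ℓ ℓ' h => ratExt_lower ha hyp h,
    fun ℓ ℓ' h hac' => ratExt_upper ha hac' hyp h,
    fun q => ratExt_rat ha hyp q,
    fun b x => le_ratExt_iff ha hyp b x⟩

include ht ha hac hfm hfi hlow hupp in
lemma plugin_const (ℓ : ℝ) :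
    EE.E t (f ℓ) =ᵐ[μ] fun ω => ghat EE t f ℓ ω := by
  have hmono := f_mono ha hlow
  have hconv := EE.monoConv t ht (fun n => f ((dyad n ℓ : ℚ) : ℝ)) (f ℓ)
    (fun n => hfm _) (fun n => hfi _) (hfm ℓ) (hfi ℓ)
    (ae_of_all _ fun ω => Or.inr (fun n m hnm =>
      hmono _ _ (dyad_antitone ℓ hnm) ω))
    (ae_of_all _ fun ω => by
      have hup : ∀ n : ℕ, f ((dyad n ℓ : ℚ) : ℝ) ω ≤ f ℓ ω + c * ((2:ℝ)^n)⁻¹ := by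
        intro n
        have h1 := hupp ℓ ((dyad n ℓ : ℚ) : ℝ) (le_dyad n ℓ) ω
        have h2 := dyad_lt n ℓ
        have hc : 0 < c := lt_of_lt_of_le ha hac
        nlinarith
      have hlo : ∀ n : ℕ, f ℓ ω ≤ f ((dyad n ℓ : ℚ) : ℝ) ω := fun n =>
        hmono _ _ (le_dyad n ℓ) ω
      have h0 : Tendsto (fun n : ℕ => f ℓ ω + c * ((2:ℝ)^n)⁻¹) atTop (nhds (f ℓ ω)) :=
        tendsto_add_inv_pow _ c
      exact tendsto_of_tendsto_of_tendsto_of_le_of_le tendsto_const_nhds h0 hlo hup)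
  filter_upwards [hconv, goodSet_ae EE ht ha hac hfm hfi hlow hupp] with ω hconv hω
  have hfacts := ghat_good_facts EE ha hω
  have hg : ∀ n : ℕ, EE.E t (f ((dyad n ℓ : ℚ) : ℝ)) ω = ghat EE t f ((dyad n ℓ : ℚ) : ℝ) ω :=
    fun n => (hfacts.2.2.1 (dyad n ℓ)).symm
  have hgt : Tendsto (fun n : ℕ => ghat EE t f ((dyad n ℓ : ℚ) : ℝ) ω) atTop
      (nhds (ghat EE t f ℓ ω)) := by
    have hlo : ∀ n : ℕ, ghat EE t f ℓ ω ≤ ghat EE t f ((dyad n ℓ : ℚ) : ℝ) ω := by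
      intro n
      have h1 := hfacts.1 ℓ _ (le_dyad n ℓ)
      have h2 := le_dyad n ℓ
      nlinarith
    have hup : ∀ n : ℕ, ghat EE t f ((dyad n ℓ : ℚ) : ℝ) ω ≤
        ghat EE t f ℓ ω + c * ((2:ℝ)^n)⁻¹ := by
      intro n
      have h1 := hfacts.2.1 ℓ _ (le_dyad n ℓ) hac
      have h2 := dyad_lt n ℓ
      have hc : 0 < c := lt_of_lt_of_le ha hac
      nlinarith
    have h0 : Tendsto (fun n : ℕ => ghat EE t f ℓ ω + c * ((2:ℝ)^n)⁻¹) atTop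
        (nhds (ghat EE t f ℓ ω)) := tendsto_add_inv_pow _ c
    exact tendsto_of_tendsto_of_tendsto_of_le_of_le tendsto_const_nhds h0 hlo hup
  have : Tendsto (fun n : ℕ => EE.E t (f ((dyad n ℓ : ℚ) : ℝ)) ω) atTop
      (nhds (ghat EE t f ℓ ω)) := by
    simpa only [hg] using hgt
  exact tendsto_nhds_unique hconv this

end Core
section Core2

lemma clamp_div (x y z : ℝ) (hz : 0 < z) :
    max (min (x/z) (y/z)) (-(y/z)) = (max (min x y) (-y))/z := by
  rw [min_div_div_right hz.le x y, ← neg_div, max_div_div_right hz.le]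

variable {Ω : Type*} {m0 : MeasurableSpace Ω} {μ : Measure Ω} [IsProbabilityMeasure μ]
  {F : Filtration ℕ m0} {N : ℕ}
variable (EE : NLExp μ F N) {t : ℕ} {f : ℝ → Ω → ℝ} {a c : ℝ}
variable (ht : t ≤ N) (ha : 0 < a) (hac : a ≤ c)
  (hfm : ∀ ℓ : ℝ, StronglyMeasurable[F N] (f ℓ))
  (hfi : ∀ ℓ : ℝ, MemLp (f ℓ) 2 μ)
  (hlow : ∀ ℓ ℓ' : ℝ, ℓ ≤ ℓ' → ∀ ω, a * (ℓ' - ℓ) ≤ f ℓ' ω - f ℓ ω)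
  (hupp : ∀ ℓ ℓ' : ℝ, ℓ ≤ ℓ' → ∀ ω, f ℓ' ω - f ℓ ω ≤ c * (ℓ' - ℓ))
  (hcm : ∀ L : Ω → ℝ, StronglyMeasurable[F t] L →
    StronglyMeasurable[F N] (fun ω => f (L ω) ω))
  (hci : ∀ L : Ω → ℝ, StronglyMeasurable[F t] L → MemLp L 2 μ →
    MemLp (fun ω => f (L ω) ω) 2 μ)

include ht ha hac hfm hfi hlow hupp hcm hci in
lemma plugin_fin (s : Finset ℝ) :
    ∀ L : Ω → ℝ, StronglyMeasurable[F t] L → (∀ ω, L ω ∈ s) →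
      EE.E t (fun ω => f (L ω) ω) =ᵐ[μ] fun ω => ghat EE t f (L ω) ω := by
  classical
  induction s using Finset.induction_on with
  | empty =>
      intro L hL hvals
      exact ae_of_all _ fun ω => absurd (hvals ω) (by simp)
  | @insert v s hv ih =>
      intro L hL hvals
      rcases s.eq_empty_or_nonempty with rfl | hne
      · have hLv : ∀ ω, L ω = v := fun ω => by have := hvals ω; simpa using this
        have h1 : (fun ω => f (L ω) ω) = f v := funext fun ω => by rw [hLv ω]
        have h2 : (fun ω => ghat EE t f (L ω) ω) = fun ω => ghat EE t f v ω :=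
          funext fun ω => by rw [hLv ω]
        rw [h1, h2]
        exact plugin_const EE ht ha hac hfm hfi hlow hupp v
      · obtain ⟨w, hw⟩ := hne
        set A : Set Ω := L ⁻¹' {v} with hAdef
        have hA : MeasurableSet[F t] A := hL.measurable (measurableSet_singleton v)
        set L' : Ω → ℝ := fun ω => if L ω = v then w else L ω with hL'def
        have hL' : StronglyMeasurable[F t] L' := by
          apply Measurable.stronglyMeasurable
          exact Measurable.ite hA measurable_const hL.measurable
        have hvals' : ∀ ω, L' ω ∈ s := by
          intro ω
          by_cases h : L ω = v
          · simp only [hL'def, if_pos h]; exact hw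
          · simp only [hL'def, if_neg h]
            have := hvals ω
            rcases Finset.mem_insert.1 this with h' | h'
            · exact absurd h' h
            · exact h'
        have hbd : ∀ ω, ‖L' ω‖ ≤ s.sup' ⟨w, hw⟩ (fun x => |x|) := fun ω => by
          rw [Real.norm_eq_abs]
          exact Finset.le_sup' (f := fun x => |x|) (hvals' ω)
        have memL' : MemLp L' 2 μ :=
          MemLp.of_bound ((hL'.mono (F.le t)).aestronglyMeasurable) _ (ae_of_all _ hbd)
        have hzero := EE.zeroOne t ht (f v) (fun ω => f (L' ω) ω) (hfm v) (hfi v)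
          (hcm L' hL') (hci L' hL' memL') A hA
        have hdecomp : (fun ω => f (L ω) ω)
            = A.indicator (f v) + Aᶜ.indicator (fun ω => f (L' ω) ω) := by
          funext ω
          by_cases h : L ω = v
          · have hmem : ω ∈ A := by simp [hAdef, h]
            rw [Pi.add_apply, Set.indicator_of_mem hmem,
              Set.indicator_of_notMem (Set.notMem_compl_iff.2 hmem), h, add_zero]
          · have hnm : ω ∉ A := by simp [hAdef, h]
            have hmem : ω ∈ Aᶜ := hnm
            rw [Pi.add_apply, Set.indicator_of_notMem hnm, Set.indicator_of_mem hmem,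
              zero_add]
            have : L' ω = L ω := if_neg h
            rw [this]
        have hP0 := plugin_const EE ht ha hac hfm hfi hlow hupp v
        have hIH := ih L' hL' hvals'
        rw [hdecomp]
        filter_upwards [hzero, hP0, hIH] with ω h0 h1 h2
        show _ = ghat EE t f (L ω) ω
        rw [h0]
        by_cases h : L ω = v
        · have hmem : ω ∈ A := by simp [hAdef, h]
          rw [Pi.add_apply, Set.indicator_of_mem hmem,
            Set.indicator_of_notMem (Set.notMem_compl_iff.2 hmem), add_zero, h1, h]
        · have hnm : ω ∉ A := by simp [hAdef, h]
          have hmem : ω ∈ Aᶜ := hnm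
          rw [Pi.add_apply, Set.indicator_of_notMem hnm, Set.indicator_of_mem hmem,
            zero_add, h2]
          have : L' ω = L ω := if_neg h
          rw [this]

include ht ha hac hfm hfi hlow hupp hcm hci in
lemma plugin_dyadic (L : Ω → ℝ) (hL : StronglyMeasurable[F t] L)
    (hLi : MemLp L 2 μ) (n : ℕ) :
    EE.E t (fun ω => f ((dyad n (L ω) : ℚ) : ℝ) ω) =ᵐ[μ]
      fun ω => ghat EE t f ((dyad n (L ω) : ℚ) : ℝ) ω := by
  classical
  have hmono := f_mono ha hlow
  set Ln : Ω → ℝ := fun ω => ((dyad n (L ω) : ℚ) : ℝ) with hLndef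
  have hLnm : Measurable[F t] Ln := dyad_measurable hL.measurable n
  have hLnsm : StronglyMeasurable[F t] Ln := hLnm.stronglyMeasurable
  have hLni : MemLp Ln 2 μ := by
    apply MemLp.of_le (hLi.norm.add (memLp_const 1))
      (hLnsm.mono (F.le t)).aestronglyMeasurable
    apply ae_of_all
    intro ω
    have h1 := le_dyad n (L ω)
    have h2 := dyad_lt n (L ω)
    have h3 : ((2:ℝ)^n)⁻¹ ≤ 1 := by
      rw [inv_le_one_iff₀]; right; exact one_le_pow₀ (by norm_num)
    simp only [Pi.add_apply, Real.norm_eq_abs]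
    rw [abs_of_nonneg (show (0:ℝ) ≤ |L ω| + 1 by positivity)]
    rw [abs_le]
    constructor
    · have h5 := neg_abs_le (L ω)
      have h6 : L ω ≤ Ln ω := h1
      linarith
    · have h5 := le_abs_self (L ω)
      have h6 : Ln ω < L ω + (2^n : ℝ)⁻¹ := h2
      linarith
  set C : ℕ → Ω → ℝ := fun m ω => max (min (Ln ω) (m : ℝ)) (-(m : ℝ)) with hCdef
  have hCsm : ∀ m, StronglyMeasurable[F t] (C m) := fun m =>
    ((hLnm.min measurable_const).max measurable_const).stronglyMeasurable
  have hCbd : ∀ m ω, |C m ω| ≤ (m : ℝ) := by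
    intro m ω
    rw [abs_le]
    constructor
    · exact neg_le_neg (le_refl (m:ℝ)) |>.trans (le_max_right _ _)
    · exact max_le (min_le_right _ _) (neg_le_self (Nat.cast_nonneg m))
  have hCi : ∀ m, MemLp (C m) 2 μ := fun m =>
    MemLp.of_bound ((hCsm m).mono (F.le t)).aestronglyMeasurable (m : ℝ)
      (ae_of_all _ fun ω => by rw [Real.norm_eq_abs]; exact hCbd m ω)
  have h2n : (0:ℝ) < 2^n := by positivity
  have hvals : ∀ m : ℕ, ∀ ω, C m ω ∈
      (Finset.Icc (-((m:ℤ) * 2^n)) ((m:ℤ) * 2^n)).image (fun k : ℤ => ((k:ℝ))/2^n) := by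
    intro m ω
    set k0 : ℤ := ⌈(2^n : ℝ) * L ω⌉ with hk0
    have hLn : Ln ω = (k0 : ℝ)/2^n := dyad_cast n (L ω)
    have hm : (m : ℝ) = (((m:ℤ) * 2^n : ℤ) : ℝ)/2^n := by
      push_cast; field_simp
    set K : ℤ := max (min k0 ((m:ℤ) * 2^n)) (-((m:ℤ) * 2^n)) with hK
    have hCK : C m ω = ((K:ℤ):ℝ)/2^n := by
      rw [hCdef]; dsimp only
      rw [hLn, hm, clamp_div _ _ _ h2n]
      congr 1
      rw [hK]
      push_cast
      ring_nf
    rw [hCK]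
    apply Finset.mem_image_of_mem
    rw [Finset.mem_Icc]
    constructor
    · exact le_max_right _ _
    · apply max_le (min_le_right _ _)
      have : (0:ℤ) ≤ (m:ℤ) * 2^n := by positivity
      omega
  have key : ∀ m : ℕ, EE.E t (fun ω => f (C m ω) ω) =ᵐ[μ] fun ω => ghat EE t f (C m ω) ω :=
    fun m => plugin_fin EE ht ha hac hfm hfi hlow hupp hcm hci _ (C m) (hCsm m) (hvals m)
  have hmc := EE.monoConv t ht (fun m ω => f (C m ω) ω) (fun ω => f (Ln ω) ω)
    (fun m => hcm (C m) (hCsm m)) (fun m => hci (C m) (hCsm m) (hCi m))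
    (hcm Ln hLnsm) (hci Ln hLnsm hLni)
    (ae_of_all _ fun ω => by
      rcases le_or_gt 0 (Ln ω) with hx | hx
      · left
        intro m m' hmm
        apply hmono _ _ _ ω
        have e1 : C m ω = min (Ln ω) (m : ℝ) := max_eq_left (le_min
          (le_trans (neg_nonpos.2 (Nat.cast_nonneg m)) hx)
          (neg_le_self (Nat.cast_nonneg m)))
        have e2 : C m' ω = min (Ln ω) (m' : ℝ) := max_eq_left (le_min
          (le_trans (neg_nonpos.2 (Nat.cast_nonneg m')) hx)
          (neg_le_self (Nat.cast_nonneg m')))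
        rw [e1, e2]
        exact min_le_min le_rfl (Nat.cast_le.2 hmm)
      · right
        intro m m' hmm
        apply hmono _ _ _ ω
        have e1 : C m ω = max (Ln ω) (-(m : ℝ)) := by
          rw [hCdef]; dsimp only
          rw [min_eq_left (le_trans hx.le (Nat.cast_nonneg m))]
        have e2 : C m' ω = max (Ln ω) (-(m' : ℝ)) := by
          rw [hCdef]; dsimp only
          rw [min_eq_left (le_trans hx.le (Nat.cast_nonneg m'))]
        rw [e1, e2]
        exact max_le (le_max_left _ _)
          (le_trans (neg_le_neg (Nat.cast_le.2 hmm)) (le_max_right _ _)))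
    (ae_of_all _ fun ω => by
      apply tendsto_atTop_of_eventually_const (i₀ := ⌈|Ln ω|⌉₊)
      intro m hm
      have h1 : |Ln ω| ≤ (m : ℝ) := le_trans (Nat.le_ceil _) (Nat.cast_le.2 hm)
      have h2 : C m ω = Ln ω := by
        rw [hCdef]; dsimp only
        rw [min_eq_left (le_trans (le_abs_self _) h1),
          max_eq_left (le_trans (neg_le_neg h1) (by have := neg_abs_le (Ln ω); linarith))]
      show f (C m ω) ω = f (Ln ω) ω
      rw [h2])
  filter_upwards [hmc, ae_all_iff.2 key, goodSet_ae EE ht ha hac hfm hfi hlow hupp]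
    with ω h1 h2 hω
  have hev : ∀ᶠ m in atTop, ghat EE t f (C m ω) ω = ghat EE t f (Ln ω) ω := by
    rw [eventually_atTop]
    refine ⟨⌈|Ln ω|⌉₊, fun m hm => ?_⟩
    have hb1 : |Ln ω| ≤ (m : ℝ) := le_trans (Nat.le_ceil _) (Nat.cast_le.2 hm)
    have h2' : C m ω = Ln ω := by
      rw [hCdef]; dsimp only
      rw [min_eq_left (le_trans (le_abs_self _) hb1),
        max_eq_left (le_trans (neg_le_neg hb1) (by have := neg_abs_le (Ln ω); linarith))]
    rw [h2']
  have hev' : (fun m : ℕ => ghat EE t f (C m ω) ω)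
      =ᶠ[atTop] (fun _ => ghat EE t f (Ln ω) ω) := hev
  have ht2 : Tendsto (fun m : ℕ => ghat EE t f (C m ω) ω) atTop
      (nhds (ghat EE t f (Ln ω) ω)) := Tendsto.congr' hev'.symm tendsto_const_nhds
  have heq : (fun m : ℕ => EE.E t (fun ω' => f (C m ω') ω') ω)
      = fun m : ℕ => ghat EE t f (C m ω) ω := funext fun m => h2 m
  rw [heq] at h1
  exact tendsto_nhds_unique h1 ht2

end Core2
section Core3

variable {Ω : Type*} {m0 : MeasurableSpace Ω} {μ : Measure Ω} [IsProbabilityMeasure μ]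
  {F : Filtration ℕ m0} {N : ℕ}
variable (EE : NLExp μ F N) {t : ℕ} {f : ℝ → Ω → ℝ} {a c : ℝ}
variable (ht : t ≤ N) (ha : 0 < a) (hac : a ≤ c)
  (hfm : ∀ ℓ : ℝ, StronglyMeasurable[F N] (f ℓ))
  (hfi : ∀ ℓ : ℝ, MemLp (f ℓ) 2 μ)
  (hlow : ∀ ℓ ℓ' : ℝ, ℓ ≤ ℓ' → ∀ ω, a * (ℓ' - ℓ) ≤ f ℓ' ω - f ℓ ω)
  (hupp : ∀ ℓ ℓ' : ℝ, ℓ ≤ ℓ' → ∀ ω, f ℓ' ω - f ℓ ω ≤ c * (ℓ' - ℓ))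
  (hcm : ∀ L : Ω → ℝ, StronglyMeasurable[F t] L →
    StronglyMeasurable[F N] (fun ω => f (L ω) ω))
  (hci : ∀ L : Ω → ℝ, StronglyMeasurable[F t] L → MemLp L 2 μ →
    MemLp (fun ω => f (L ω) ω) 2 μ)

include ht ha hac hfm hfi hlow hupp hcm hci in
lemma plugin (L : Ω → ℝ) (hL : StronglyMeasurable[F t] L) (hLi : MemLp L 2 μ) :
    EE.E t (fun ω => f (L ω) ω) =ᵐ[μ] fun ω => ghat EE t f (L ω) ω := by
  have hmono := f_mono ha hlow
  have hc : 0 < c := lt_of_lt_of_le ha hac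
  set Ln : ℕ → Ω → ℝ := fun n ω => ((dyad n (L ω) : ℚ) : ℝ) with hLndef
  have hLnm : ∀ n, StronglyMeasurable[F t] (Ln n) := fun n =>
    (dyad_measurable hL.measurable n).stronglyMeasurable
  have hLni : ∀ n, MemLp (Ln n) 2 μ := by
    intro n
    apply MemLp.of_le (hLi.norm.add (memLp_const 1))
      ((hLnm n).mono (F.le t)).aestronglyMeasurable
    apply ae_of_all
    intro ω
    have h1 := le_dyad n (L ω)
    have h2 := dyad_lt n (L ω)
    have h3 : ((2:ℝ)^n)⁻¹ ≤ 1 := by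
      rw [inv_le_one_iff₀]; right; exact one_le_pow₀ (by norm_num)
    simp only [Pi.add_apply, Real.norm_eq_abs]
    rw [abs_of_nonneg (show (0:ℝ) ≤ |L ω| + 1 by positivity)]
    rw [abs_le]
    constructor
    · have h5 := neg_abs_le (L ω)
      have h6 : L ω ≤ Ln n ω := h1
      linarith
    · have h5 := le_abs_self (L ω)
      have h6 : Ln n ω < L ω + (2^n : ℝ)⁻¹ := h2
      linarith
  have key : ∀ n, EE.E t (fun ω => f (Ln n ω) ω) =ᵐ[μ] fun ω => ghat EE t f (Ln n ω) ω :=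
    fun n => plugin_dyadic EE ht ha hac hfm hfi hlow hupp hcm hci L hL hLi n
  have hmc := EE.monoConv t ht (fun n ω => f (Ln n ω) ω) (fun ω => f (L ω) ω)
    (fun n => hcm _ (hLnm n)) (fun n => hci _ (hLnm n) (hLni n)) (hcm L hL) (hci L hL hLi)
    (ae_of_all _ fun ω => Or.inr (fun n m hnm => hmono _ _ (dyad_antitone (L ω) hnm) ω))
    (ae_of_all _ fun ω => by
      have hup : ∀ n : ℕ, f (Ln n ω) ω ≤ f (L ω) ω + c * ((2:ℝ)^n)⁻¹ := by
        intro n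
        have h1 := hupp (L ω) (Ln n ω) (le_dyad n (L ω)) ω
        have h2 : Ln n ω < L ω + ((2:ℝ)^n)⁻¹ := dyad_lt n (L ω)
        nlinarith
      have hlo : ∀ n : ℕ, f (L ω) ω ≤ f (Ln n ω) ω := fun n =>
        hmono _ _ (le_dyad n (L ω)) ω
      exact tendsto_of_tendsto_of_tendsto_of_le_of_le tendsto_const_nhds
        (tendsto_add_inv_pow _ c) hlo hup)
  filter_upwards [hmc, ae_all_iff.2 key, goodSet_ae EE ht ha hac hfm hfi hlow hupp]
    with ω h1 h2 hω
  have hfacts := ghat_good_facts EE ha hω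
  have hgt : Tendsto (fun n : ℕ => ghat EE t f (Ln n ω) ω) atTop
      (nhds (ghat EE t f (L ω) ω)) := by
    have hlo : ∀ n : ℕ, ghat EE t f (L ω) ω ≤ ghat EE t f (Ln n ω) ω := by
      intro n
      have hd1 := hfacts.1 (L ω) _ (le_dyad n (L ω))
      have hd2 := le_dyad n (L ω)
      nlinarith
    have hup : ∀ n : ℕ, ghat EE t f (Ln n ω) ω ≤ ghat EE t f (L ω) ω + c * ((2:ℝ)^n)⁻¹ := by
      intro n
      have hd1 := hfacts.2.1 (L ω) _ (le_dyad n (L ω)) hac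
      have hd2 : Ln n ω < L ω + ((2:ℝ)^n)⁻¹ := dyad_lt n (L ω)
      nlinarith
    exact tendsto_of_tendsto_of_tendsto_of_le_of_le tendsto_const_nhds
      (tendsto_add_inv_pow _ c) hlo hup
  have heq : (fun n : ℕ => EE.E t (fun ω' => f (Ln n ω') ω') ω)
      = fun n : ℕ => ghat EE t f (Ln n ω) ω := funext fun n => h2 n
  rw [heq] at h1
  exact tendsto_nhds_unique h1 hgt

include ht ha hac hfm hfi hlow hupp hcm hci in
lemma nl_solve (X : Ω → ℝ) (hXm : StronglyMeasurable[F t] X) (hXi : MemLp X 2 μ) :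
    ∃ R : Ω → ℝ, StronglyMeasurable[F t] R ∧ MemLp R 2 μ ∧
      EE.E t (fun ω => f (R ω) ω) =ᵐ[μ] X := by
  classical
  set Good := goodSet EE t f a c with hGooddef
  have hGoodMeas : MeasurableSet[F t] Good := goodSet_measurableSet EE ht hfm hfi
  set R : Ω → ℝ := fun ω =>
    if ω ∈ Good then theRoot (fun ℓ => ghat EE t f ℓ ω) (X ω) else 0 with hRdef
  have hfacts : ∀ ω, ω ∈ Good →
      (∀ ℓ ℓ' : ℝ, ℓ ≤ ℓ' →
        a * (ℓ' - ℓ) ≤ ghat EE t f ℓ' ω - ghat EE t f ℓ ω) ∧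
      (∀ ℓ ℓ' : ℝ, ℓ ≤ ℓ' → ghat EE t f ℓ' ω - ghat EE t f ℓ ω ≤ c * (ℓ' - ℓ)) ∧
      (∀ b x : ℝ, x ≤ ghat EE t f b ω ↔ ∀ q : ℚ, b ≤ (q : ℝ) →
        x ≤ EE.E t (f (q : ℝ)) ω) := by
    intro ω hω
    obtain ⟨u1, u2, _, u4⟩ := ghat_good_facts EE ha hω
    exact ⟨u1, fun ℓ ℓ' h => u2 ℓ ℓ' h hac, u4⟩
  have hRmeas : Measurable[F t] R := by
    apply measurable_of_Iic (mδ := (F t : MeasurableSpace Ω))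
    intro b
    have hEq : R ⁻¹' Set.Iic b =
        (Good ∩ ⋂ q : ℚ, {ω | b ≤ (q:ℝ) → X ω ≤ EE.E t (f (q:ℝ)) ω}) ∪
        (Goodᶜ ∩ (if (0:ℝ) ≤ b then Set.univ else ∅)) := by
      ext ω
      by_cases hω : ω ∈ Good
      · obtain ⟨u1, u2, u4⟩ := hfacts ω hω
        have hRω : R ω = theRoot (fun ℓ => ghat EE t f ℓ ω) (X ω) := if_pos hω
        have hroot := theRoot_le_iff ha hac u1 u2 (X ω) b
        simp only [Set.mem_preimage, Set.mem_Iic, Set.mem_union, Set.mem_inter_iff,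
          Set.mem_iInter, Set.mem_setOf_eq, Set.mem_compl_iff, hω, not_true_eq_false,
          false_and, or_false, true_and]
        rw [hRω]
        rw [hroot]
        exact u4 b (X ω)
      · have hRω : R ω = 0 := if_neg hω
        simp only [Set.mem_preimage, Set.mem_Iic, Set.mem_union, Set.mem_inter_iff,
          Set.mem_iInter, Set.mem_setOf_eq, Set.mem_compl_iff, hω, false_and, or_false,
          false_or, not_false_eq_true, true_and]
        rw [hRω]
        split_ifs with h0b
        · simp [h0b]
        · simp only [Set.mem_empty_iff_false, iff_false]
          intro hb; exact h0b hb
    rw [hEq]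
    apply MeasurableSet.union
    · apply hGoodMeas.inter
      apply MeasurableSet.iInter
      intro q
      by_cases hq : b ≤ (q:ℝ)
      · have : {ω | b ≤ (q:ℝ) → X ω ≤ EE.E t (f (q:ℝ)) ω}
            = {ω | X ω ≤ EE.E t (f (q:ℝ)) ω} := by
          ext ω; simp [hq]
        rw [this]
        exact measurableSet_le hXm.measurable
          (EE.adapted t ht _ (hfm _) (hfi _)).measurable
      · have : {ω | b ≤ (q:ℝ) → X ω ≤ EE.E t (f (q:ℝ)) ω} = Set.univ := by
          ext ω; simp [hq]
        rw [this]
        exact @MeasurableSet.univ _ (F t)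
    · apply hGoodMeas.compl.inter
      split_ifs
      exacts [@MeasurableSet.univ _ (F t), @MeasurableSet.empty _ (F t)]
  have hRsm : StronglyMeasurable[F t] R := hRmeas.stronglyMeasurable
  have hRi : MemLp R 2 μ := by
    have hB : MemLp (fun ω => a⁻¹ * (|X ω| + |EE.E t (f 0) ω|)) 2 μ := by
      have h1 : MemLp (fun ω => ‖X ω‖) 2 μ := hXi.norm
      have h2 : MemLp (fun ω => ‖EE.E t (f 0) ω‖) 2 μ :=
        (EE.sqInt t ht (f 0) (hfm 0) (hfi 0)).norm
      have h3 := (h1.add h2).const_mul a⁻¹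
      simpa [Real.norm_eq_abs] using h3
    apply MemLp.of_le hB (hRsm.mono (F.le t)).aestronglyMeasurable
    filter_upwards [goodSet_ae EE ht ha hac hfm hfi hlow hupp,
      plugin_const EE ht ha hac hfm hfi hlow hupp 0] with ω hω h0
    obtain ⟨u1, u2, _⟩ := hfacts ω hω
    have hRω : R ω = theRoot (fun ℓ => ghat EE t f ℓ ω) (X ω) := if_pos hω
    have habs := theRoot_abs_le ha hac u1 u2 (X ω)
    have hg0 : ghat EE t f 0 ω = EE.E t (f 0) ω := h0.symm
    rw [Real.norm_eq_abs, Real.norm_eq_abs, hRω]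
    have hBnn : (0:ℝ) ≤ a⁻¹ * (|X ω| + |EE.E t (f 0) ω|) := by positivity
    rw [abs_of_nonneg hBnn]
    calc |theRoot (fun ℓ => ghat EE t f ℓ ω) (X ω)|
        ≤ (|X ω| + |ghat EE t f 0 ω|) / a := habs
      _ = a⁻¹ * (|X ω| + |EE.E t (f 0) ω|) := by rw [hg0, div_eq_inv_mul]
  refine ⟨R, hRsm, hRi, ?_⟩
  filter_upwards [plugin EE ht ha hac hfm hfi hlow hupp hcm hci R hRsm hRi,
    goodSet_ae EE ht ha hac hfm hfi hlow hupp] with ω h1 hω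
  obtain ⟨u1, u2, _⟩ := hfacts ω hω
  have hRω : R ω = theRoot (fun ℓ => ghat EE t f ℓ ω) (X ω) := if_pos hω
  rw [h1]
  show ghat EE t f (R ω) ω = X ω
  rw [hRω]
  exact theRoot_spec ha hac u1 u2 (X ω)

include ht ha hac hfm hfi hlow hupp hcm hci in
lemma nl_unique (X : Ω → ℝ) (L₁ L₂ : Ω → ℝ)
    (h1m : StronglyMeasurable[F t] L₁) (h1i : MemLp L₁ 2 μ)
    (h2m : StronglyMeasurable[F t] L₂) (h2i : MemLp L₂ 2 μ)
    (e1 : EE.E t (fun ω => f (L₁ ω) ω) =ᵐ[μ] X)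
    (e2 : EE.E t (fun ω => f (L₂ ω) ω) =ᵐ[μ] X) : L₁ =ᵐ[μ] L₂ := by
  have p1 := plugin EE ht ha hac hfm hfi hlow hupp hcm hci L₁ h1m h1i
  have p2 := plugin EE ht ha hac hfm hfi hlow hupp hcm hci L₂ h2m h2i
  filter_upwards [p1, p2, e1, e2, goodSet_ae EE ht ha hac hfm hfi hlow hupp]
    with ω p1 p2 e1 e2 hω
  have hfacts := ghat_good_facts EE ha hω
  have hgeq : ghat EE t f (L₁ ω) ω = ghat EE t f (L₂ ω) ω := by
    rw [← p1, ← p2, e1, e2]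
  exact root_unique ha (fun ℓ ℓ' h => hfacts.1 ℓ ℓ' h) hgeq

end Core3
section Payoff

variable {Ω : Type*}

/-- the integrand of the representation at time `t` -/
noncomputable def integrand (r : ℝ) (K : ℕ → Ω → ℝ) (t N : ℕ) (ω : Ω) : ℝ :=
  (∑ u ∈ Finset.Ico t N,
    r / (1 + r) * ((1 + r) ^ u)⁻¹ * runMax (fun v ω' => -K v ω') t u ω)
  + ((1 + r) ^ N)⁻¹ * runMax (fun v ω' => -K v ω') t N ω

/-- the integrand as a function of the value `ℓ` of `-K t` -/
noncomputable def payoff (r : ℝ) (K : ℕ → Ω → ℝ) (t N : ℕ) (ℓ : ℝ) (ω : Ω) : ℝ :=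
  (r / (1 + r) * ((1 + r) ^ t)⁻¹ * ℓ
  + ∑ u ∈ Finset.Ico (t+1) N, r / (1 + r) * ((1 + r) ^ u)⁻¹ *
      max ℓ (runMax (fun v ω' => -K v ω') (t+1) u ω))
  + ((1 + r) ^ N)⁻¹ * max ℓ (runMax (fun v ω' => -K v ω') (t+1) N ω)

lemma integrand_eq_payoff {r : ℝ} {K : ℕ → Ω → ℝ} {t N : ℕ} (htN : t < N) (ω : Ω) :
    integrand r K t N ω = payoff r K t N (-K t ω) ω := by
  have h1 : runMax (fun v ω' => -K v ω') t t ω = -K t ω := runMax_self t ω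
  have h2 : ∀ u, t < u → runMax (fun v ω' => -K v ω') t u ω
      = max (-K t ω) (runMax (fun v ω' => -K v ω') (t+1) u ω) :=
    fun u hu => runMax_left_succ hu ω
  simp only [integrand, payoff]
  rw [Finset.sum_eq_sum_Ico_succ_bot htN, h1, h2 N htN,
    Finset.sum_congr rfl (fun u hu => by
      rw [h2 u (Nat.lt_of_succ_le (Finset.mem_Ico.1 hu).1)])]

lemma integrand_congr {r : ℝ} {K K' : ℕ → Ω → ℝ} {s N : ℕ} {ω : Ω} (hsN : s ≤ N)
    (h : ∀ v, s ≤ v → v ≤ N → K v ω = K' v ω) :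
    integrand r K s N ω = integrand r K' s N ω := by
  simp only [integrand]
  congr 1
  · apply Finset.sum_congr rfl
    intro u hu
    obtain ⟨hu1, hu2⟩ := Finset.mem_Ico.1 hu
    congr 1
    exact runMax_congr hu1 (fun v hv1 hv2 => by rw [h v hv1 (hv2.trans hu2.le)])
  · congr 1
    exact runMax_congr hsN (fun v hv1 hv2 => by rw [h v hv1 hv2])

lemma payoff_congr {r : ℝ} {K K' : ℕ → Ω → ℝ} {t N : ℕ} {ℓ : ℝ} {ω : Ω}
    (h : ∀ v, t + 1 ≤ v → v ≤ N → K v ω = K' v ω) (htN : t + 1 ≤ N) :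
    payoff r K t N ℓ ω = payoff r K' t N ℓ ω := by
  simp only [payoff]
  congr 1
  · congr 1
    apply Finset.sum_congr rfl
    intro u hu
    obtain ⟨hu1, hu2⟩ := Finset.mem_Ico.1 hu
    congr 2
    exact runMax_congr hu1 (fun v hv1 hv2 => by rw [h v hv1 (hv2.trans hu2.le)])
  · congr 2
    exact runMax_congr htN (fun v hv1 hv2 => by rw [h v hv1 hv2])

lemma integrand_at_N {r : ℝ} {K : ℕ → Ω → ℝ} {N : ℕ} (ω : Ω) :
    integrand r K N N ω = ((1 + r) ^ N)⁻¹ * (-K N ω) := by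
  simp [integrand, runMax_self]

section Reg

variable {m0 : MeasurableSpace Ω} {μ : Measure Ω} [IsProbabilityMeasure μ]
  {F : Filtration ℕ m0} {N : ℕ} {r : ℝ} {K : ℕ → Ω → ℝ} {t : ℕ}

lemma payoff_low (hr : 0 < r) (hr1 : 0 < 1 + r) :
    ∀ ℓ ℓ' : ℝ, ℓ ≤ ℓ' → ∀ ω : Ω,
      (r / (1 + r) * ((1 + r) ^ t)⁻¹) * (ℓ' - ℓ) ≤
        payoff r K t N ℓ' ω - payoff r K t N ℓ ω := by
  intro ℓ ℓ' h ω
  simp only [payoff]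
  have hsum : (∑ u ∈ Finset.Ico (t+1) N, r / (1 + r) * ((1 + r) ^ u)⁻¹ *
        max ℓ (runMax (fun v ω' => -K v ω') (t+1) u ω))
      ≤ ∑ u ∈ Finset.Ico (t+1) N, r / (1 + r) * ((1 + r) ^ u)⁻¹ *
        max ℓ' (runMax (fun v ω' => -K v ω') (t+1) u ω) := by
    apply Finset.sum_le_sum
    intro u _
    apply mul_le_mul_of_nonneg_left (max_le_max h le_rfl)
    positivity
  have hb : ((1 + r) ^ N)⁻¹ * max ℓ (runMax (fun v ω' => -K v ω') (t+1) N ω)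
      ≤ ((1 + r) ^ N)⁻¹ * max ℓ' (runMax (fun v ω' => -K v ω') (t+1) N ω) := by
    apply mul_le_mul_of_nonneg_left (max_le_max h le_rfl)
    positivity
  have hA : r / (1 + r) * ((1 + r) ^ t)⁻¹ * ℓ' =
      r / (1 + r) * ((1 + r) ^ t)⁻¹ * ℓ + r / (1 + r) * ((1 + r) ^ t)⁻¹ * (ℓ' - ℓ) := by
    ring
  linarith

lemma payoff_upp (hr : 0 < r) (hr1 : 0 < 1 + r) :
    ∀ ℓ ℓ' : ℝ, ℓ ≤ ℓ' → ∀ ω : Ω,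
      payoff r K t N ℓ' ω - payoff r K t N ℓ ω ≤
        (r / (1 + r) * ((1 + r) ^ t)⁻¹
          + (∑ u ∈ Finset.Ico (t+1) N, r / (1 + r) * ((1 + r) ^ u)⁻¹)
          + ((1 + r) ^ N)⁻¹) * (ℓ' - ℓ) := by
  intro ℓ ℓ' h ω
  have hmax : ∀ x : ℝ, max ℓ' x ≤ max ℓ x + (ℓ' - ℓ) := by
    intro x
    apply max_le
    · have := le_max_left ℓ x; linarith
    · have := le_max_right ℓ x; linarith
  simp only [payoff]
  have hsum : (∑ u ∈ Finset.Ico (t+1) N, r / (1 + r) * ((1 + r) ^ u)⁻¹ *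
        max ℓ' (runMax (fun v ω' => -K v ω') (t+1) u ω))
      ≤ (∑ u ∈ Finset.Ico (t+1) N, r / (1 + r) * ((1 + r) ^ u)⁻¹ *
        max ℓ (runMax (fun v ω' => -K v ω') (t+1) u ω))
      + (∑ u ∈ Finset.Ico (t+1) N, r / (1 + r) * ((1 + r) ^ u)⁻¹) * (ℓ' - ℓ) := by
    rw [Finset.sum_mul, ← Finset.sum_add_distrib]
    apply Finset.sum_le_sum
    intro u _
    have h1 := hmax (runMax (fun v ω' => -K v ω') (t+1) u ω)
    have h2 : (0:ℝ) ≤ r / (1 + r) * ((1 + r) ^ u)⁻¹ := by positivity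
    nlinarith
  have hb : ((1 + r) ^ N)⁻¹ * max ℓ' (runMax (fun v ω' => -K v ω') (t+1) N ω)
      ≤ ((1 + r) ^ N)⁻¹ * max ℓ (runMax (fun v ω' => -K v ω') (t+1) N ω)
        + ((1 + r) ^ N)⁻¹ * (ℓ' - ℓ) := by
    have h1 := hmax (runMax (fun v ω' => -K v ω') (t+1) N ω)
    have h2 : (0:ℝ) ≤ ((1 + r) ^ N)⁻¹ := by positivity
    nlinarith
  nlinarith [hsum, hb]

lemma runMax_reg (htN : t + 1 ≤ N)
    (hKm : ∀ v, t + 1 ≤ v → v ≤ N → StronglyMeasurable[F v] (K v))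
    (hKi : ∀ v, t + 1 ≤ v → v ≤ N → MemLp (K v) 2 μ) :
    ∀ u, t + 1 ≤ u → u ≤ N →
      StronglyMeasurable[F N] (fun ω => runMax (fun v ω' => -K v ω') (t+1) u ω) ∧
      MemLp (fun ω => runMax (fun v ω' => -K v ω') (t+1) u ω) 2 μ := by
  intro u hu1 hu2
  constructor
  · apply runMax_stronglyMeasurable hu1
    intro v hv1 hv2
    exact ((hKm v hv1 (hv2.trans hu2)).mono (F.mono (hv2.trans hu2))).neg
  · apply runMax_memLp hu1
    intro v hv1 hv2
    exact (hKi v hv1 (hv2.trans hu2)).neg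

lemma payoff_meas (htN : t + 1 ≤ N)
    (hKm : ∀ v, t + 1 ≤ v → v ≤ N → StronglyMeasurable[F v] (K v))
    (hKi : ∀ v, t + 1 ≤ v → v ≤ N → MemLp (K v) 2 μ)
    {L : Ω → ℝ} (hL : Measurable[F N] L) :
    StronglyMeasurable[F N] (fun ω => payoff r K t N (L ω) ω) := by
  have hR := runMax_reg (μ := μ) htN hKm hKi
  apply Measurable.stronglyMeasurable
  apply Measurable.add
  apply Measurable.add
  · exact hL.const_mul _
  · apply Finset.measurable_sum
    intro u hu
    obtain ⟨hu1, hu2⟩ := Finset.mem_Ico.1 hu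
    exact (hL.max ((hR u hu1 hu2.le).1.measurable)).const_mul _
  · exact (hL.max ((hR N htN le_rfl).1.measurable)).const_mul _

lemma payoff_int (htN : t + 1 ≤ N)
    (hKm : ∀ v, t + 1 ≤ v → v ≤ N → StronglyMeasurable[F v] (K v))
    (hKi : ∀ v, t + 1 ≤ v → v ≤ N → MemLp (K v) 2 μ)
    {L : Ω → ℝ} (hL : AEStronglyMeasurable L μ) (hLi : MemLp L 2 μ) :
    MemLp (fun ω => payoff r K t N (L ω) ω) 2 μ := by
  have hR := runMax_reg (μ := μ) htN hKm hKi
  apply MemLp.add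
  apply MemLp.add
  · exact hLi.const_mul _
  · apply memLp_finset_sum
    intro u hu
    obtain ⟨hu1, hu2⟩ := Finset.mem_Ico.1 hu
    exact (memLp_max hLi (hR u hu1 hu2.le).2).const_mul _
  · exact (memLp_max hLi (hR N htN le_rfl).2).const_mul _

end Reg

end Payoff
section SolveWrap

variable {Ω : Type*} {m0 : MeasurableSpace Ω} {μ : Measure Ω} [IsProbabilityMeasure μ]
  {F : Filtration ℕ m0} {N : ℕ} (EE : NLExp μ F N) {r : ℝ} {K : ℕ → Ω → ℝ} {t : ℕ}

lemma payoff_solve (hr : 0 < r) (htN : t < N)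
    (hKm : ∀ v, t + 1 ≤ v → v ≤ N → StronglyMeasurable[F v] (K v))
    (hKi : ∀ v, t + 1 ≤ v → v ≤ N → MemLp (K v) 2 μ)
    (X : Ω → ℝ) (hXm : StronglyMeasurable[F t] X) (hXi : MemLp X 2 μ) :
    ∃ R : Ω → ℝ, StronglyMeasurable[F t] R ∧ MemLp R 2 μ ∧
      EE.E t (fun ω => payoff r K t N (R ω) ω) =ᵐ[μ] X := by
  have hr1 : (0:ℝ) < 1 + r := by linarith
  have h1N : t + 1 ≤ N := htN
  have hAp : (0:ℝ) < r / (1 + r) * ((1 + r) ^ t)⁻¹ := by positivity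
  have hsum0 : (0:ℝ) ≤ ∑ u ∈ Finset.Ico (t+1) N, r / (1 + r) * ((1 + r) ^ u)⁻¹ :=
    Finset.sum_nonneg fun u _ => by positivity
  have hb0 : (0:ℝ) ≤ ((1 + r) ^ N)⁻¹ := by positivity
  exact nl_solve EE (f := payoff r K t N)
    (a := r / (1 + r) * ((1 + r) ^ t)⁻¹)
    (c := r / (1 + r) * ((1 + r) ^ t)⁻¹
      + (∑ u ∈ Finset.Ico (t+1) N, r / (1 + r) * ((1 + r) ^ u)⁻¹) + ((1 + r) ^ N)⁻¹)
    htN.le hAp (by linarith)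
    (fun ℓ => payoff_meas h1N hKm hKi measurable_const)
    (fun ℓ => payoff_int h1N hKm hKi aestronglyMeasurable_const (memLp_const ℓ))
    (payoff_low hr hr1) (payoff_upp hr hr1)
    (fun L hL => payoff_meas h1N hKm hKi ((hL.mono (F.mono htN.le)).measurable))
    (fun L hL hLi => payoff_int h1N hKm hKi ((hL.mono (F.le t)).aestronglyMeasurable) hLi)
    X hXm hXi

lemma payoff_unique (hr : 0 < r) (htN : t < N)
    (hKm : ∀ v, t + 1 ≤ v → v ≤ N → StronglyMeasurable[F v] (K v))
    (hKi : ∀ v, t + 1 ≤ v → v ≤ N → MemLp (K v) 2 μ)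
    (X : Ω → ℝ) (L₁ L₂ : Ω → ℝ)
    (h1m : StronglyMeasurable[F t] L₁) (h1i : MemLp L₁ 2 μ)
    (h2m : StronglyMeasurable[F t] L₂) (h2i : MemLp L₂ 2 μ)
    (e1 : EE.E t (fun ω => payoff r K t N (L₁ ω) ω) =ᵐ[μ] X)
    (e2 : EE.E t (fun ω => payoff r K t N (L₂ ω) ω) =ᵐ[μ] X) : L₁ =ᵐ[μ] L₂ := by
  have hr1 : (0:ℝ) < 1 + r := by linarith
  have h1N : t + 1 ≤ N := htN
  have hAp : (0:ℝ) < r / (1 + r) * ((1 + r) ^ t)⁻¹ := by positivity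
  have hsum0 : (0:ℝ) ≤ ∑ u ∈ Finset.Ico (t+1) N, r / (1 + r) * ((1 + r) ^ u)⁻¹ :=
    Finset.sum_nonneg fun u _ => by positivity
  have hb0 : (0:ℝ) ≤ ((1 + r) ^ N)⁻¹ := by positivity
  exact nl_unique EE (f := payoff r K t N)
    (a := r / (1 + r) * ((1 + r) ^ t)⁻¹)
    (c := r / (1 + r) * ((1 + r) ^ t)⁻¹
      + (∑ u ∈ Finset.Ico (t+1) N, r / (1 + r) * ((1 + r) ^ u)⁻¹) + ((1 + r) ^ N)⁻¹)
    htN.le hAp (by linarith)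
    (fun ℓ => payoff_meas h1N hKm hKi measurable_const)
    (fun ℓ => payoff_int h1N hKm hKi aestronglyMeasurable_const (memLp_const ℓ))
    (payoff_low hr hr1) (payoff_upp hr hr1)
    (fun L hL => payoff_meas h1N hKm hKi ((hL.mono (F.mono htN.le)).measurable))
    (fun L hL hLi => payoff_int h1N hKm hKi ((hL.mono (F.le t)).aestronglyMeasurable) hLi)
    X L₁ L₂ h1m h1i h2m h2i e1 e2

/-- regularity of the composed payoff at the `F N` level, for use with `congr_ae` -/
lemma payoff_comp_reg (htN : t < N)
    (hKm : ∀ v, t + 1 ≤ v → v ≤ N → StronglyMeasurable[F v] (K v))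
    (hKi : ∀ v, t + 1 ≤ v → v ≤ N → MemLp (K v) 2 μ)
    {L : Ω → ℝ} (hL : StronglyMeasurable[F t] L) (hLi : MemLp L 2 μ) :
    StronglyMeasurable[F N] (fun ω => payoff r K t N (L ω) ω) ∧
      MemLp (fun ω => payoff r K t N (L ω) ω) 2 μ :=
  ⟨payoff_meas htN hKm hKi ((hL.mono (F.mono htN.le)).measurable),
   payoff_int htN hKm hKi ((hL.mono (F.le t)).aestronglyMeasurable) hLi⟩

end SolveWrap
/-- **Universal representation of the discounted asset price for American puts.**
There exists a unique (up to a.s. equality at each time) adapted, square-integrable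
process `K` such that, for every `t ∈ {0,...,N}`,
`-(1+r)^{-t} P_t = E t [ ∑_{u=t}^{N-1} (r/(1+r)) (1+r)^{-u} max_{t≤v≤u}(-K_v)
+ (1+r)^{-N} max_{t≤v≤N}(-K_v) ]` a.s. -/
theorem universal_process_exists_unique
{Ω : Type*} [TopologicalSpace Ω] [PolishSpace Ω]
    [m0 : MeasurableSpace Ω] [BorelSpace Ω]
    (μ : Measure Ω) [IsProbabilityMeasure μ]
    (F : Filtration ℕ m0) (N : ℕ) (hN : 1 ≤ N)
    (EE : NLExp μ F N)
    (r : ℝ) (hr : 0 < r)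
    (S : ℕ → Ω → ℝ)
    (hS_adapted : ∀ t, t ≤ N → StronglyMeasurable[F t] (S t))
    (hS_sqInt : ∀ t, t ≤ N → MemLp (fun ω => ((1 + r) ^ t)⁻¹ * S t ω) 2 μ) :
    (∃ K : ℕ → Ω → ℝ,
      (∀ t, t ≤ N → StronglyMeasurable[F t] (K t)) ∧
      (∀ t, t ≤ N → MemLp (K t) 2 μ) ∧
      ∀ t, t ≤ N →
        (fun ω => -(((1 + r) ^ t)⁻¹ * S t ω)) =ᵐ[μ] EE.E t fun ω =>
          (∑ u ∈ Finset.Ico t N,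
            r / (1 + r) * ((1 + r) ^ u)⁻¹ * runMax (fun v ω' => -K v ω') t u ω)
          + ((1 + r) ^ N)⁻¹ * runMax (fun v ω' => -K v ω') t N ω) ∧
    ∀ K₁ K₂ : ℕ → Ω → ℝ,
      (∀ t, t ≤ N → StronglyMeasurable[F t] (K₁ t)) →
      (∀ t, t ≤ N → MemLp (K₁ t) 2 μ) →
      (∀ t, t ≤ N →
        (fun ω => -(((1 + r) ^ t)⁻¹ * S t ω)) =ᵐ[μ] EE.E t fun ω =>
          (∑ u ∈ Finset.Ico t N,
            r / (1 + r) * ((1 + r) ^ u)⁻¹ * runMax (fun v ω' => -K₁ v ω') t u ω)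
          + ((1 + r) ^ N)⁻¹ * runMax (fun v ω' => -K₁ v ω') t N ω) →
      (∀ t, t ≤ N → StronglyMeasurable[F t] (K₂ t)) →
      (∀ t, t ≤ N → MemLp (K₂ t) 2 μ) →
      (∀ t, t ≤ N →
        (fun ω => -(((1 + r) ^ t)⁻¹ * S t ω)) =ᵐ[μ] EE.E t fun ω =>
          (∑ u ∈ Finset.Ico t N,
            r / (1 + r) * ((1 + r) ^ u)⁻¹ * runMax (fun v ω' => -K₂ v ω') t u ω)
          + ((1 + r) ^ N)⁻¹ * runMax (fun v ω' => -K₂ v ω') t N ω) →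
      ∀ t, t ≤ N → K₁ t =ᵐ[μ] K₂ t := by
  classical
  have hr1 : (0:ℝ) < 1 + r := by linarith
  have hSNi : MemLp (S N) 2 μ := by
    have h := (hS_sqInt N le_rfl).const_mul ((1 + r) ^ N)
    have he : (fun ω => ((1 + r) ^ N : ℝ) * (((1 + r) ^ N)⁻¹ * S N ω)) = S N := by
      funext ω; field_simp
    rwa [he] at h
  have hXm : ∀ t, t ≤ N → StronglyMeasurable[F t] (fun ω => -(((1 + r) ^ t)⁻¹ * S t ω)) :=
    fun t h => ((hS_adapted t h).const_mul (((1 + r) ^ t)⁻¹)).neg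
  have hXi : ∀ t, t ≤ N → MemLp (fun ω => -(((1 + r) ^ t)⁻¹ * S t ω)) 2 μ :=
    fun t h => (hS_sqInt t h).neg
  have uniqN : ∀ K' : ℕ → Ω → ℝ, StronglyMeasurable[F N] (K' N) → MemLp (K' N) 2 μ →
      ((fun ω => -(((1 + r) ^ N)⁻¹ * S N ω)) =ᵐ[μ] EE.E N (integrand r K' N N)) →
      K' N =ᵐ[μ] S N := by
    intro K' hm hi hrep
    have hfun : integrand r K' N N = fun ω => ((1 + r) ^ N)⁻¹ * (-(K' N ω)) :=
      funext fun ω => integrand_at_N ω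
    rw [hfun] at hrep
    have hid := EE.E_id (le_refl N) ((hm.neg).const_mul (((1 + r) ^ N)⁻¹))
      ((hi.neg).const_mul (((1 + r) ^ N)⁻¹))
    have hcomb := hrep.trans hid
    have hb : ((1 + r) ^ N : ℝ)⁻¹ ≠ 0 := by positivity
    filter_upwards [hcomb] with ω h
    simp only [Pi.neg_apply] at h
    have h2 : ((1 + r) ^ N : ℝ)⁻¹ * K' N ω = ((1 + r) ^ N)⁻¹ * S N ω := by
      ring_nf at h ⊢
      linarith
    exact mul_left_cancel₀ hb h2
  constructor
  · -- Existence
    have exist : ∀ m : ℕ, ∃ K : ℕ → Ω → ℝ,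
        (∀ s, N - m ≤ s → s ≤ N → StronglyMeasurable[F s] (K s)) ∧
        (∀ s, N - m ≤ s → s ≤ N → MemLp (K s) 2 μ) ∧
        (∀ s, N - m ≤ s → s ≤ N →
          (fun ω => -(((1 + r) ^ s)⁻¹ * S s ω)) =ᵐ[μ] EE.E s (integrand r K s N)) := by
      intro m
      induction m with
      | zero =>
          refine ⟨fun _ => S N, ?_, ?_, ?_⟩
          · intro s h1 h2
            have h3 : N = s := by omega
            subst h3
            exact hS_adapted N le_rfl
          · intro s h1 h2
            have h3 : N = s := by omega
            subst h3
            exact hSNi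
          · intro s h1 h2
            have h3 : N = s := by omega
            subst h3
            have hfun : integrand r (fun _ => S N) N N
                = fun ω => ((1 + r) ^ N)⁻¹ * (-(S N ω)) := funext fun ω => integrand_at_N ω
            rw [hfun]
            have hid := EE.E_id (le_refl N)
              (((hS_adapted N le_rfl).neg).const_mul (((1 + r) ^ N)⁻¹))
              ((hSNi.neg).const_mul (((1 + r) ^ N)⁻¹))
            refine EventuallyEq.trans ?_ hid.symm
            apply ae_of_all
            intro ω
            show -(((1 + r) ^ N)⁻¹ * S N ω) = ((1 + r) ^ N)⁻¹ * (-(S N ω))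
            ring
      | succ m ih =>
          obtain ⟨K, hKm, hKi, hKrep⟩ := ih
          by_cases hm : N ≤ m
          · exact ⟨K, fun s h1 h2 => hKm s (by omega) h2, fun s h1 h2 => hKi s (by omega) h2,
              fun s h1 h2 => hKrep s (by omega) h2⟩
          · set t := N - m - 1 with htdef
            have htN : t < N := by omega
            have hKm' : ∀ v, t + 1 ≤ v → v ≤ N → StronglyMeasurable[F v] (K v) :=
              fun v h1 h2 => hKm v (by omega) h2
            have hKi' : ∀ v, t + 1 ≤ v → v ≤ N → MemLp (K v) 2 μ :=
              fun v h1 h2 => hKi v (by omega) h2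
            obtain ⟨R, hRm, hRi, hRe⟩ := payoff_solve EE hr htN hKm' hKi'
              (fun ω => -(((1 + r) ^ t)⁻¹ * S t ω)) (hXm t htN.le) (hXi t htN.le)
            refine ⟨Function.update K t (fun ω => -R ω), ?_, ?_, ?_⟩
            · intro s h1 h2
              by_cases hs : s = t
              · subst hs; rw [Function.update_self]; exact hRm.neg
              · rw [Function.update_of_ne hs]; exact hKm s (by omega) h2
            · intro s h1 h2
              by_cases hs : s = t
              · subst hs; rw [Function.update_self]; exact hRi.neg
              · rw [Function.update_of_ne hs]; exact hKi s (by omega) h2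
            · intro s h1 h2
              by_cases hs : s = t
              · subst hs
                have hfun : integrand r (Function.update K t (fun ω => -R ω)) t N
                    = fun ω => payoff r K t N (R ω) ω := by
                  funext ω
                  rw [integrand_eq_payoff htN ω, Function.update_self]
                  simp only [neg_neg]
                  exact payoff_congr (fun v hv1 hv2 => by
                    rw [Function.update_of_ne (show v ≠ t by omega)]) htN
                rw [hfun]
                exact hRe.symm
              · have hfun : integrand r (Function.update K t (fun ω => -R ω)) s N
                    = integrand r K s N := funext fun ω =>
                  integrand_congr h2 (fun v hv1 hv2 => by
                    rw [Function.update_of_ne (show v ≠ t by omega)])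
                rw [hfun]
                exact hKrep s (by omega) h2
    obtain ⟨K, h1, h2, h3⟩ := exist N
    exact ⟨K, fun t ht => h1 t (by omega) ht, fun t ht => h2 t (by omega) ht,
      fun t ht => h3 t (by omega) ht⟩
  · -- Uniqueness
    intro K₁ K₂ h1m h1i h1rep h2m h2i h2rep
    have h1rep' : ∀ t, t ≤ N →
        (fun ω => -(((1 + r) ^ t)⁻¹ * S t ω)) =ᵐ[μ] EE.E t (integrand r K₁ t N) :=
      fun t ht => h1rep t ht
    have h2rep' : ∀ t, t ≤ N →
        (fun ω => -(((1 + r) ^ t)⁻¹ * S t ω)) =ᵐ[μ] EE.E t (integrand r K₂ t N) :=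
      fun t ht => h2rep t ht
    have main : ∀ m : ℕ, ∀ t, t ≤ N → N ≤ t + m → K₁ t =ᵐ[μ] K₂ t := by
      intro m
      induction m with
      | zero =>
          intro t h1 h2
          have h3 : N = t := by omega
          subst h3
          exact (uniqN K₁ (h1m N le_rfl) (h1i N le_rfl) (h1rep' N le_rfl)).trans
            (uniqN K₂ (h2m N le_rfl) (h2i N le_rfl) (h2rep' N le_rfl)).symm
      | succ m ihm =>
          intro t h1 h2
          by_cases hc : N ≤ t + m
          · exact ihm t h1 hc
          · have htN : t < N := by omega
            have hK1m' : ∀ v, t + 1 ≤ v → v ≤ N → StronglyMeasurable[F v] (K₁ v) :=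
              fun v _ b => h1m v b
            have hK1i' : ∀ v, t + 1 ≤ v → v ≤ N → MemLp (K₁ v) 2 μ :=
              fun v _ b => h1i v b
            have hK2m' : ∀ v, t + 1 ≤ v → v ≤ N → StronglyMeasurable[F v] (K₂ v) :=
              fun v _ b => h2m v b
            have hK2i' : ∀ v, t + 1 ≤ v → v ≤ N → MemLp (K₂ v) 2 μ :=
              fun v _ b => h2i v b
            have e1 : EE.E t (fun ω => payoff r K₁ t N (-K₁ t ω) ω) =ᵐ[μ]
                (fun ω => -(((1 + r) ^ t)⁻¹ * S t ω)) := by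
              have h := h1rep' t htN.le
              rw [show integrand r K₁ t N = fun ω => payoff r K₁ t N (-K₁ t ω) ω from
                funext fun ω => integrand_eq_payoff htN ω] at h
              exact h.symm
            have e2base : EE.E t (fun ω => payoff r K₂ t N (-K₂ t ω) ω) =ᵐ[μ]
                (fun ω => -(((1 + r) ^ t)⁻¹ * S t ω)) := by
              have h := h2rep' t htN.le
              rw [show integrand r K₂ t N = fun ω => payoff r K₂ t N (-K₂ t ω) ω from
                funext fun ω => integrand_eq_payoff htN ω] at h
              exact h.symm
            have hvae : ∀ᵐ ω ∂μ, ∀ v, t + 1 ≤ v → v ≤ N → K₁ v ω = K₂ v ω := by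
              rw [ae_all_iff]
              intro v
              by_cases hv : t + 1 ≤ v ∧ v ≤ N
              · filter_upwards [ihm v hv.2 (by omega)] with ω hω
                intro _ _; exact hω
              · apply ae_of_all
                intro ω hv1 hv2
                exact absurd ⟨hv1, hv2⟩ hv
            have hae : (fun ω => payoff r K₁ t N (-K₂ t ω) ω)
                =ᵐ[μ] (fun ω => payoff r K₂ t N (-K₂ t ω) ω) := by
              filter_upwards [hvae] with ω hω
              exact payoff_congr (fun v a b => hω v a b) htN
            have hreg1 := payoff_comp_reg (r := r) htN hK1m' hK1i'
              ((h2m t htN.le).neg) ((h2i t htN.le).neg)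
            have hreg2 := payoff_comp_reg (r := r) htN hK2m' hK2i'
              ((h2m t htN.le).neg) ((h2i t htN.le).neg)
            have e2 : EE.E t (fun ω => payoff r K₁ t N (-K₂ t ω) ω) =ᵐ[μ]
                (fun ω => -(((1 + r) ^ t)⁻¹ * S t ω)) :=
              (EE.congr_ae htN.le hreg1.1 hreg1.2 hreg2.1 hreg2.2 hae).trans e2base
            have huniq := payoff_unique EE hr htN hK1m' hK1i'
              (fun ω => -(((1 + r) ^ t)⁻¹ * S t ω))
              (fun ω => -K₁ t ω) (fun ω => -K₂ t ω)
              ((h1m t htN.le).neg) ((h1i t htN.le).neg)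
              ((h2m t htN.le).neg) ((h2i t htN.le).neg) e1 e2
            filter_upwards [huniq] with ω hω
            have hneg : -K₁ t ω = -K₂ t ω := hω
            linarith
    intro t ht
    exact main N t ht (by omega)
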